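/- Let H be self-adjoint on L²(ℝⁿ) and ψ(x,t) a C¹, nowhere-vanishing solution of i∂_t ψ = Hψ with Hψ of class C¹. Then ∂_t Im(∇ψ/ψ) = −∇ Re((Hψ)/ψ); i.e. the time derivative of the Bohm momentum field equals minus the spatial gradient of the conditional expectation of H given X. -/

import Mathlib

open Complex

/-- if `ψ(x,t)` is a nowhere-vanishing, sufficiently regular
solution of `i∂_tψ = Hψ` (with `Hψ` denoting the function `(Hψ)(x,t)`), then the
Bohm momentum field `p_B = Im(∇ψ/ψ)` satisfies
`∂_t Im(∂_jψ/ψ) = −∂_j Re((Hψ)/ψ)` pointwise. -/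
theorem stmt_13 {n : ℕ} (ψ Hψ : (Fin n → ℝ) → ℝ → ℂ)
    (hψ : ContDiff ℝ 2 (fun q : (Fin n → ℝ) × ℝ => ψ q.1 q.2))
    (hHψ : ContDiff ℝ 1 (fun q : (Fin n → ℝ) × ℝ => Hψ q.1 q.2))
    (hne : ∀ x t, ψ x t ≠ 0)
    (hSch : ∀ x t, Complex.I * deriv (fun s => ψ x s) t = Hψ x t)
    (x : Fin n → ℝ) (t : ℝ) (j : Fin n) :
    deriv (fun s => ((fderiv ℝ (fun y => ψ y s) x (Pi.single j 1)) / ψ x s).im) t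
      = - fderiv ℝ (fun y => (Hψ y t / ψ y t).re) x (Pi.single j 1) := by
  classical
  set e : Fin n → ℝ := Pi.single j 1 with he
  set u : (Fin n → ℝ) × ℝ := (e, 0) with hu
  set v : (Fin n → ℝ) × ℝ := ((0 : Fin n → ℝ), (1 : ℝ)) with hv
  have hΨ : Differentiable ℝ (fun q : (Fin n → ℝ) × ℝ => ψ q.1 q.2) :=
    hψ.differentiable (by norm_num)
  set D := fderiv ℝ (fun q : (Fin n → ℝ) × ℝ => ψ q.1 q.2) with hD
  have hDc : ContDiff ℝ 1 D := hψ.fderiv_right (by norm_num)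
  have hDd : Differentiable ℝ D := hDc.differentiable one_ne_zero
  set S := fderiv ℝ D (x, t) with hS
  have hsymm : S v u = S u v := hψ.contDiffAt.isSymmSndFDerivAt (by norm_num) v u
  -- spatial partial derivatives
  have hpsiy : ∀ (y : Fin n → ℝ) (s : ℝ),
      HasFDerivAt (fun y' => ψ y' s)
        ((D (y, s)).comp (ContinuousLinearMap.inl ℝ (Fin n → ℝ) ℝ)) y :=
    fun y s => by
      have := (hΨ (y, s)).hasFDerivAt.comp y (hasFDerivAt_prodMk_left (𝕜 := ℝ) y s); exact this
  have hfd : ∀ s : ℝ, fderiv ℝ (fun y => ψ y s) x e = D (x, s) u := by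
    intro s
    rw [(hpsiy x s).fderiv]
    rfl
  -- time partial derivatives
  have hpsit : ∀ (y : Fin n → ℝ) (s : ℝ),
      HasDerivAt (fun s' => ψ y s') (D (y, s) v) s :=
    fun y s => (hΨ (y, s)).hasFDerivAt.comp_hasDerivAt s
      (HasDerivAt.prodMk (hasDerivAt_const s y) (hasDerivAt_id s))
  -- derivative in time of s ↦ D (x, s) u
  have hDt : HasDerivAt (fun s => D (x, s)) (S v) t :=
    (hDd (x, t)).hasFDerivAt.comp_hasDerivAt t
      (HasDerivAt.prodMk (hasDerivAt_const t x) (hasDerivAt_id t))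
  have hA : HasDerivAt (fun s => D (x, s) u) (S v u) t := by
    simpa using hDt.clm_apply (hasDerivAt_const t u)
  have hg : HasDerivAt (fun s => D (x, s) u / ψ x s)
      ((S v u * ψ x t - D (x, t) u * D (x, t) v) / ψ x t ^ 2) t :=
    hA.div (hpsit x t) (hne x t)
  have hgim : HasDerivAt (fun s => (D (x, s) u / ψ x s).im)
      (((S v u * ψ x t - D (x, t) u * D (x, t) v) / ψ x t ^ 2).im) t :=
    Complex.imCLM.hasFDerivAt.comp_hasDerivAt t hg
  have hLHS : deriv (fun s => ((fderiv ℝ (fun y => ψ y s) x e) / ψ x s).im) t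
      = ((S v u * ψ x t - D (x, t) u * D (x, t) v) / ψ x t ^ 2).im := by
    have : (fun s => ((fderiv ℝ (fun y => ψ y s) x e) / ψ x s).im)
        = fun s => (D (x, s) u / ψ x s).im := by
      funext s; rw [hfd s]
    rw [this, hgim.deriv]
  -- now the right-hand side
  have hHrw : ∀ y, Hψ y t = Complex.I * D (y, t) v := fun y => by
    rw [← hSch y t, (hpsit y t).deriv]
  have hψdiff : ∀ y, DifferentiableAt ℝ (fun y' => ψ y' t) y :=
    fun y => (hpsiy y t).differentiableAt
  have hHdiff : DifferentiableAt ℝ (fun y => Hψ y t) x :=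
    by have := (hHψ.differentiable one_ne_zero (x, t)).comp x
        (hasFDerivAt_prodMk_left (𝕜 := ℝ) x t).differentiableAt; exact this
  have hFdiff : DifferentiableAt ℝ (fun y => (Hψ y t / ψ y t).re) x := by
    have h1 : DifferentiableAt ℝ (fun y => Hψ y t / ψ y t) x := by
      simp only [div_eq_mul_inv]
      exact hHdiff.mul ((hψdiff x).inv (hne x t))
    exact Complex.reCLM.differentiable.differentiableAt.comp x h1
  have hl : HasDerivAt (fun r : ℝ => x + r • e) e 0 := by
    simpa using ((hasDerivAt_id (0 : ℝ)).smul_const e).const_add x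
  have h0 : x + (0 : ℝ) • e = x := by simp
  have hRHS : fderiv ℝ (fun y => (Hψ y t / ψ y t).re) x e
      = deriv (fun r : ℝ => (Hψ (x + r • e) t / ψ (x + r • e) t).re) 0 := by
    have h2 : HasFDerivAt (fun y => (Hψ y t / ψ y t).re)
        (fderiv ℝ (fun y => (Hψ y t / ψ y t).re) x) (x + (0 : ℝ) • e) := by
      rw [h0]; exact hFdiff.hasFDerivAt
    exact (h2.comp_hasDerivAt 0 hl).deriv.symm
  -- compute the 1-D derivative along the line
  have hlt : HasDerivAt (fun r : ℝ => ((x + r • e, t) : (Fin n → ℝ) × ℝ)) u 0 :=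
    HasDerivAt.prodMk hl (hasDerivAt_const 0 t)
  have hDl : HasDerivAt (fun r : ℝ => D (x + r • e, t)) (S u) 0 := by
    have h2 : HasFDerivAt D S (x + (0 : ℝ) • e, t) := by
      rw [h0]; exact (hDd (x, t)).hasFDerivAt
    exact h2.comp_hasDerivAt 0 hlt
  have hBl : HasDerivAt (fun r : ℝ => D (x + r • e, t) v) (S u v) 0 := by
    simpa using hDl.clm_apply (hasDerivAt_const 0 v)
  have hNum : HasDerivAt (fun r : ℝ => Complex.I * D (x + r • e, t) v)
      (Complex.I * S u v) 0 := hBl.const_mul Complex.I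
  have hpl : HasDerivAt (fun r : ℝ => ψ (x + r • e) t) (D (x, t) u) 0 := by
    have h2 : HasFDerivAt (fun y' => ψ y' t)
        ((D (x, t)).comp (ContinuousLinearMap.inl ℝ (Fin n → ℝ) ℝ)) (x + (0 : ℝ) • e) := by
      rw [h0]; exact hpsiy x t
    exact h2.comp_hasDerivAt 0 hl
  have hne0 : ψ (x + (0 : ℝ) • e) t ≠ 0 := by rw [h0]; exact hne x t
  have hq : HasDerivAt (fun r : ℝ => Complex.I * D (x + r • e, t) v / ψ (x + r • e) t)
      ((Complex.I * S u v * ψ x t - Complex.I * D (x, t) v * D (x, t) u) / ψ x t ^ 2) 0 := by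
    have := hNum.div hpl hne0
    rw [h0] at this
    exact this
  have hqre : HasDerivAt (fun r : ℝ => (Complex.I * D (x + r • e, t) v / ψ (x + r • e) t).re)
      (((Complex.I * S u v * ψ x t - Complex.I * D (x, t) v * D (x, t) u) / ψ x t ^ 2).re) 0 :=
    Complex.reCLM.hasFDerivAt.comp_hasDerivAt 0 hq
  have hRHS2 : deriv (fun r : ℝ => (Hψ (x + r • e) t / ψ (x + r • e) t).re) 0
      = ((Complex.I * S u v * ψ x t - Complex.I * D (x, t) v * D (x, t) u) / ψ x t ^ 2).re := by
    have : (fun r : ℝ => (Hψ (x + r • e) t / ψ (x + r • e) t).re)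
        = fun r : ℝ => (Complex.I * D (x + r • e, t) v / ψ (x + r • e) t).re := by
      funext r; rw [hHrw (x + r • e)]
    rw [this, hqre.deriv]
  rw [hLHS, hRHS, hRHS2, hsymm]
  set a := D (x, t) u
  set b := D (x, t) v
  set c := ψ x t
  have h3 : Complex.I * S u v * c - Complex.I * b * a = Complex.I * (S u v * c - a * b) := by
    ring
  rw [h3, mul_div_assoc]
  simp [Complex.mul_re]
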